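/- Let L be a distributive meet semi-lattice with top and let F be a filter of L. Then the complement L ∖ F is a Frink ideal if and only if there exists a Frink ideal I of L with F ∩ I = ∅ such that F is maximal among the filters of L disjoint from I (i.e., every filter G of L with F ⊆ G and G ∩ I = ∅ satisfies G = F). -/

import Mathlib

/-- A filter of a meet semi-lattice: a nonempty upper set closed under meets. -/
def IsSLFilter {L : Type*} [SemilatticeInf L] (F : Set L) : Prop :=
  F.Nonempty ∧ (∀ a b : L, a ∈ F → a ≤ b → b ∈ F) ∧
    (∀ a b : L, a ∈ F → b ∈ F → a ⊓ b ∈ F)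

/-- A prime (meet-prime) filter of a meet semi-lattice. -/
def IsSLPrimeFilter {L : Type*} [SemilatticeInf L] (F : Set L) : Prop :=
  IsSLFilter F ∧ F ≠ Set.univ ∧
    ∀ F₁ F₂ : Set L, IsSLFilter F₁ → IsSLFilter F₂ → F₁ ∩ F₂ ⊆ F → F₁ ⊆ F ∨ F₂ ⊆ F

/-- An ideal of a meet semi-lattice: a nonempty lower set in which any two
elements have a common upper bound lying in the ideal. -/
def IsSLIdeal {L : Type*} [SemilatticeInf L] (I : Set L) : Prop :=
  I.Nonempty ∧ (∀ a b : L, a ∈ I → b ≤ a → b ∈ I) ∧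
    (∀ a b : L, a ∈ I → b ∈ I → ∃ c ∈ I, a ≤ c ∧ b ≤ c)

/-- A meet semi-lattice is distributive. -/
def IsDistribSL (L : Type*) [SemilatticeInf L] : Prop :=
  ∀ a b₁ b₂ : L, b₁ ⊓ b₂ ≤ a → ∃ c₁ c₂ : L, b₁ ≤ c₁ ∧ b₂ ≤ c₂ ∧ a = c₁ ⊓ c₂

/-- A Frink ideal of a meet semi-lattice. -/
def IsFrinkIdeal {L : Type*} [SemilatticeInf L] (I : Set L) : Prop :=
  I.Nonempty ∧ ∀ A : Finset L, A.Nonempty → ↑A ⊆ I →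
    ∀ c : L, (⋂ a ∈ A, Set.Ici a) ⊆ Set.Ici c → c ∈ I

/-- An optimal filter: a filter whose complement is a Frink ideal. -/
def IsOptimalFilter {L : Type*} [SemilatticeInf L] (F : Set L) : Prop :=
  IsSLFilter F ∧ IsFrinkIdeal Fᶜ

/-- σ(a): the set of prime filters containing `a`. -/
def sigmaSet {L : Type*} [SemilatticeInf L] (a : L) : Set (Set L) :=
  {P | IsSLPrimeFilter P ∧ a ∈ P}

/-- φ(a): the set of optimal filters containing `a`. -/
def phiSet {L : Type*} [SemilatticeInf L] (a : L) : Set (Set L) :=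
  {F | IsOptimalFilter F ∧ a ∈ F}

lemma key_lemma {L : Type*} [SemilatticeInf L] (hd : IsDistribSL L) :
    ∀ (A : Finset L) (f x : L), (∀ a ∈ A, f ⊓ a ≤ x) →
      ∃ g : L, (∀ a ∈ A, a ≤ g) ∧ (A.Nonempty → f ⊓ g ≤ x) := by
  intro A
  classical
  induction A using Finset.induction_on with
  | empty => intro f x _; exact ⟨x, by simp, by simp⟩
  | insert _ _ hnot ih =>
    rename_i a s
    intro f x hfx
    rcases s.eq_empty_or_nonempty with rfl | hs
    · have h1 : f ⊓ a ≤ x := hfx a (by simp)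
      obtain ⟨c₁, c₂, hc₁, hc₂, hx⟩ := hd x f a h1
      refine ⟨c₂, ?_, fun _ => ?_⟩
      · intro b hb; simp at hb; subst hb; exact hc₂
      · rw [hx]; exact inf_le_inf hc₁ le_rfl
    · obtain ⟨g, hg, hfg⟩ := ih f x (fun b hb => hfx b (Finset.mem_insert_of_mem hb))
      have hfg := hfg hs
      obtain ⟨e, h, he, hh, hx⟩ := hd x f g hfg
      have h2 : f ⊓ a ≤ h := le_trans (hfx a (Finset.mem_insert_self a s)) (hx ▸ inf_le_right)
      obtain ⟨e', h', he', hh', hhx⟩ := hd h f a h2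
      refine ⟨h', ?_, fun _ => ?_⟩
      · intro b hb
        rcases Finset.mem_insert.mp hb with rfl | hb
        · exact hh'
        · exact le_trans (hg b hb) (le_trans hh (hhx ▸ inf_le_right))
      · rw [hx, hhx]
        exact le_inf (le_trans inf_le_left he) (le_inf (le_trans inf_le_left he') inf_le_right)

/-- A filter has Frink-ideal complement iff it is maximal among the filters
disjoint from some Frink ideal. -/
theorem compl_frink_iff_maximal_disjoint {L : Type*} [SemilatticeInf L] [OrderTop L]
    (hd : IsDistribSL L) (F : Set L) (hF : IsSLFilter F) :
    IsFrinkIdeal Fᶜ ↔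
      ∃ I : Set L, IsFrinkIdeal I ∧ F ∩ I = ∅ ∧
        ∀ G : Set L, IsSLFilter G → F ⊆ G → G ∩ I = ∅ → G = F := by
  classical
  constructor
  · intro h
    refine ⟨Fᶜ, h, by simp, fun G hG hFG hGd => Set.Subset.antisymm ?_ hFG⟩
    intro x hxG
    by_contra hxF
    exact Set.eq_empty_iff_forall_notMem.mp hGd x ⟨hxG, hxF⟩
  · rintro ⟨I, hI, hdisj, hmax⟩
    have hIF : I ⊆ Fᶜ := fun i hi hiF =>
      Set.eq_empty_iff_forall_notMem.mp hdisj i ⟨hiF, hi⟩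
    constructor
    · exact hI.1.imp (fun i hi => hIF hi)
    · intro A hA hAF c hub
      simp only [Set.mem_compl_iff]
      intro hcF
      -- for each a ∈ A, the filter generated by F and a meets I
      have hstep : ∀ a ∈ A, ∃ fa da : L, fa ∈ F ∧ da ∈ I ∧ fa ⊓ a ≤ da := by
        intro a ha
        have haF : a ∉ F := hAF ha
        set G : Set L := {x | ∃ f ∈ F, f ⊓ a ≤ x} with hGdef
        have hGfil : IsSLFilter G := by
          obtain ⟨f0, hf0⟩ := hF.1
          refine ⟨⟨a, f0, hf0, inf_le_right⟩, ?_, ?_⟩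
          · rintro x y ⟨f, hf, hfx⟩ hxy; exact ⟨f, hf, hfx.trans hxy⟩
          · rintro x y ⟨f, hf, hfx⟩ ⟨f', hf', hfy⟩
            refine ⟨f ⊓ f', hF.2.2 f f' hf hf', le_inf ?_ ?_⟩
            · exact le_trans (inf_le_inf (inf_le_left) le_rfl) hfx
            · exact le_trans (inf_le_inf (inf_le_right) le_rfl) hfy
        have hFG : F ⊆ G := fun f hf => ⟨f, hf, inf_le_left⟩
        have haG : a ∈ G := by
          obtain ⟨f0, hf0⟩ := hF.1
          exact ⟨f0, hf0, inf_le_right⟩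
        have hGI : (G ∩ I).Nonempty := by
          rcases Set.eq_empty_or_nonempty (G ∩ I) with he | hne
          · exact absurd (hmax G hGfil hFG he ▸ haG) haF
          · exact hne
        obtain ⟨d, ⟨f, hf, hfd⟩, hdI⟩ := hGI
        exact ⟨f, d, hf, hdI, hfd⟩
      choose! fa da hfaF hdaI hle using hstep
      set f0 : L := c ⊓ A.inf' hA fa with hf0def
      have hinfF : A.inf' hA fa ∈ F := by
        refine Finset.inf'_mem F ?_ _ hA _ (fun i hi => hfaF i hi)
        exact fun x hx y hy => hF.2.2 x y hx hy
      have hf0F : f0 ∈ F := hF.2.2 _ _ hcF hinfF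
      have hf0I : f0 ∈ I := by
        refine hI.2 (A.image da) (hA.image da) ?_ f0 ?_
        · intro d hd
          simp only [Finset.coe_image, Set.mem_image, Finset.mem_coe] at hd
          obtain ⟨a, ha, rfl⟩ := hd
          exact hdaI a ha
        · intro x hx
          simp only [Set.mem_iInter, Set.mem_Ici] at hx
          have hx' : ∀ a ∈ A, da a ≤ x := fun a ha =>
            hx (da a) (Finset.mem_image_of_mem da ha)
          have hkey : ∀ a ∈ A, f0 ⊓ a ≤ x := by
            intro a ha
            have h1 : f0 ≤ fa a := le_trans inf_le_right (Finset.inf'_le fa ha)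
            exact le_trans (inf_le_inf h1 le_rfl) (le_trans (hle a ha) (hx' a ha))
          obtain ⟨g, hg, hfgx⟩ := key_lemma hd A f0 x hkey
          have hcg : c ≤ g := hub (by
            simp only [Set.mem_iInter, Set.mem_Ici]
            exact fun a ha => hg a ha)
          have : f0 ≤ g := le_trans inf_le_left hcg
          exact le_trans (le_inf le_rfl this) (hfgx hA)
      exact Set.eq_empty_iff_forall_notMem.mp hdisj f0 ⟨hf0F, hf0I⟩
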